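/- Let h ≥ 2 and G ≅ (ℤ/2^h ℤ)². Then s'(G) = s(G) - 1 = 4·2^h - 4, where s(G) is the smallest ℓ such that every multiset over G of length ≥ ℓ has a zero-sum sub-multiset of length 2^h, and s'(G) is the analogous constant restricted to zero-sum multisets. -/

import Mathlib

open Multiset

-- << paste of s1 assumed; test standalone with imports of defs >>
section Halving
variable (m : ℕ) [NeZero m]
lemma two_mod_mod (s : ℕ) : ((2 * (s % m) : ℕ) : ZMod (m * 2)) = ((2 * s : ℕ) : ZMod (m * 2)) := by
  rw [ZMod.natCast_eq_natCast_iff]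
  simpa [mul_comm m 2] using Nat.ModEq.mul_left' (c := 2) (Nat.mod_modEq s m)
def phi : ZMod m →+ ZMod (m * 2) where
  toFun a := ((2 * a.val : ℕ) : ZMod (m * 2))
  map_zero' := by simp
  map_add' a b := by
    show ((2 * (a + b).val : ℕ) : ZMod (m * 2)) = _
    rw [ZMod.val_add, two_mod_mod]; push_cast; ring
lemma phi_apply (a : ZMod m) : phi m a = ((2 * a.val : ℕ) : ZMod (m * 2)) := rfl
lemma phi_injective : Function.Injective (phi m) := by
  intro a b hab
  have h := (ZMod.natCast_eq_natCast_iff _ _ _).mp hab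
  rw [mul_comm m 2] at h
  have h2 : a.val ≡ b.val [MOD m] := Nat.ModEq.mul_left_cancel' (by norm_num) h
  exact ZMod.val_injective _ (h2.eq_of_lt_of_lt (ZMod.val_lt a) (ZMod.val_lt b))
def hf (z : ZMod (m * 2)) : ZMod m := ((z.val / 2 : ℕ) : ZMod m)
lemma parity_iff (z : ZMod (m * 2)) :
    ZMod.castHom (dvd_mul_left 2 m) (ZMod 2) z = 0 ↔ 2 ∣ z.val := by
  rw [ZMod.castHom_apply, ← ZMod.natCast_val, ZMod.natCast_eq_zero_iff]
lemma phi_hf (z : ZMod (m * 2)) (hz : 2 ∣ z.val) : phi m (hf m z) = z := by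
  rw [phi_apply, hf, ZMod.val_natCast, two_mod_mod, Nat.mul_div_cancel' hz, ZMod.natCast_val,
    ZMod.cast_id]
end Halving

section Pairs
variable (m : ℕ) [NeZero m]

def Phi : ZMod m × ZMod m →+ ZMod (m * 2) × ZMod (m * 2) :=
  AddMonoidHom.prodMap (phi m) (phi m)

def P2 : ZMod (m * 2) × ZMod (m * 2) →+ ZMod 2 × ZMod 2 :=
  AddMonoidHom.prodMap (ZMod.castHom (dvd_mul_left 2 m) (ZMod 2)).toAddMonoidHom
    (ZMod.castHom (dvd_mul_left 2 m) (ZMod 2)).toAddMonoidHom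

lemma Phi_injective : Function.Injective (Phi m) := by
  intro a b hab
  have h1 := congrArg Prod.fst hab
  have h2 := congrArg Prod.snd hab
  exact Prod.ext (phi_injective m h1) (phi_injective m h2)

def Hf (z : ZMod (m * 2) × ZMod (m * 2)) : ZMod m × ZMod m := (hf m z.1, hf m z.2)

lemma Phi_Hf (z : ZMod (m * 2) × ZMod (m * 2)) (hz : P2 m z = 0) : Phi m (Hf m z) = z := by
  have h1 : ZMod.castHom (dvd_mul_left 2 m) (ZMod 2) z.1 = 0 := congrArg Prod.fst hz
  have h2 : ZMod.castHom (dvd_mul_left 2 m) (ZMod 2) z.2 = 0 := congrArg Prod.snd hz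
  exact Prod.ext (phi_hf m _ ((parity_iff m _).mp h1)) (phi_hf m _ ((parity_iff m _).mp h2))

abbrev half (z : (ZMod (m * 2) × ZMod (m * 2)) × (ZMod (m * 2) × ZMod (m * 2))) :
    ZMod m × ZMod m := Hf m (z.1 + z.2)

def Good (z : (ZMod (m * 2) × ZMod (m * 2)) × (ZMod (m * 2) × ZMod (m * 2))) : Prop :=
  P2 m z.1 = P2 m z.2

def elems (P : Multiset ((ZMod (m * 2) × ZMod (m * 2)) × (ZMod (m * 2) × ZMod (m * 2)))) :
    Multiset (ZMod (m * 2) × ZMod (m * 2)) := P.map Prod.fst + P.map Prod.snd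

lemma card_elems (P) : (elems m P).card = 2 * P.card := by
  simp [elems]; ring

lemma elems_le {P Q} (h : Q ≤ P) : elems m Q ≤ elems m P :=
  add_le_add (map_le_map h) (map_le_map h)

lemma elems_add (P Q) : elems m (P + Q) = elems m P + elems m Q := by
  simp [elems]; exact add_add_add_comm _ _ _ _

lemma sum_elems (P) (hP : ∀ z ∈ P, Good m z) :
    (elems m P).sum = Phi m (P.map (half m)).sum := by
  rw [elems, Multiset.sum_add, ← Multiset.sum_map_add]
  rw [show P.map (fun z => z.1 + z.2) = P.map (fun z => Phi m (half m z)) from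
    Multiset.map_congr rfl fun z hz => ?_]
  · rw [AddMonoidHom.map_multiset_sum, Multiset.map_map]; rfl
  · have hg : P2 m z.1 = P2 m z.2 := hP z hz
    have : P2 m (z.1 + z.2) = 0 := by
      rw [_root_.map_add, hg]
      exact (by decide : ∀ w : ZMod 2 × ZMod 2, w + w = 0) _
    exact (Phi_Hf m _ this).symm

end Pairs

section MultisetLemmas
variable {α β : Type*} [DecidableEq α] [DecidableEq β]

lemma exists_le_map (f : α → β) {U : Multiset β} :
    ∀ {P : Multiset α}, U ≤ P.map f → ∃ Q, Q ≤ P ∧ Q.map f = U := by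
  induction U using Multiset.induction with
  | empty => exact fun _ => ⟨0, Multiset.zero_le _, rfl⟩
  | cons a U ih =>
    intro P h
    have ha : a ∈ P.map f := mem_of_le h (mem_cons_self a U)
    obtain ⟨x, hx, hfx⟩ := mem_map.mp ha
    have hmap : P.map f = a ::ₘ (P.erase x).map f := by
      conv_lhs => rw [← cons_erase hx]
      rw [map_cons, hfx]
    have hU : U ≤ (P.erase x).map f := by
      have := erase_le_erase a h
      rwa [erase_cons_head, hmap, erase_cons_head] at this
    obtain ⟨Q', hQ'le, hQ'map⟩ := ih hU
    refine ⟨x ::ₘ Q', ?_, by rw [map_cons, hfx, hQ'map]⟩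
    calc x ::ₘ Q' ≤ x ::ₘ P.erase x := cons_le_cons x hQ'le
    _ = P := cons_erase hx

lemma exists_dup (f : α → β) {S : Multiset α} (h : ¬ (S.map f).Nodup) :
    ∃ x, x ∈ S ∧ ∃ y, y ∈ S.erase x ∧ f x = f y := by
  rw [nodup_iff_count_le_one] at h
  push_neg at h
  obtain ⟨a, ha⟩ := h
  have ha2 : 2 ≤ count a (S.map f) := ha
  have hmem : a ∈ S.map f := count_pos.mp (by omega)
  obtain ⟨x, hx, hfx⟩ := mem_map.mp hmem
  have hmap : S.map f = a ::ₘ (S.erase x).map f := by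
    conv_lhs => rw [← cons_erase hx]
    rw [map_cons, hfx]
  have : 1 ≤ count a ((S.erase x).map f) := by
    rw [hmap, count_cons_self] at ha2; omega
  have hcp : 0 < count a ((S.erase x).map f) := this
  obtain ⟨y, hy, hfy⟩ := mem_map.mp (count_pos.mp hcp)
  exact ⟨x, hx, y, hy, hfx.trans hfy.symm⟩

lemma exists_pairing (f : α → β) (S : Multiset α) :
    ∃ (P : Multiset (α × α)) (R : Multiset α),
      (P.map Prod.fst + P.map Prod.snd) + R = S ∧ (∀ z ∈ P, f z.1 = f z.2) ∧
      (R.map f).Nodup := by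
  induction S using Multiset.strongInductionOn with
  | ih S ih =>
    by_cases hnd : (S.map f).Nodup
    · exact ⟨0, S, by simp, by simp, hnd⟩
    · obtain ⟨x, hx, y, hy, hfxy⟩ := exists_dup f hnd
      have hlt : (S.erase x).erase y < S :=
        lt_of_le_of_lt (erase_le y _) (erase_lt.mpr hx)
      obtain ⟨P, R, hsum, hgood, hnd'⟩ := ih _ hlt
      refine ⟨(x, y) ::ₘ P, R, ?_, ?_, hnd'⟩
      · rw [map_cons, map_cons]
        show x ::ₘ map Prod.fst P + (y ::ₘ map Prod.snd P) + R = S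
        rw [show x ::ₘ map Prod.fst P + (y ::ₘ map Prod.snd P) + R
            = x ::ₘ y ::ₘ ((map Prod.fst P + map Prod.snd P) + R) from by
          simp [Multiset.cons_add, Multiset.add_cons]; exact cons_swap y x _]
        rw [hsum, cons_erase hy, cons_erase hx]
      · intro z hz
        rcases mem_cons.mp hz with h | h
        · subst h; exact hfxy
        · exact hgood z h

lemma nodup_card_le [Fintype β] {R : Multiset α} (f : α → β) (h : (R.map f).Nodup) :
    R.card ≤ Fintype.card β := by
  have : (R.map f).toFinset.card = (R.map f).card := Multiset.toFinset_card_of_nodup h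
  have h2 := Finset.card_le_univ (R.map f).toFinset
  rw [this, card_map] at h2
  exact h2.trans (le_of_eq rfl)

lemma nodup_card_eq_univ [Fintype β] {R : Multiset α} (f : α → β)
    (h : (R.map f).Nodup) (hc : R.card = Fintype.card β) (b : β) :
    ∃ x, x ∈ R ∧ f x = b := by
  have h1 : (R.map f).toFinset.card = Fintype.card β := by
    rw [Multiset.toFinset_card_of_nodup h, card_map, hc]
  have : (R.map f).toFinset = Finset.univ := Finset.eq_univ_of_card _ h1
  have hb : b ∈ (R.map f).toFinset := this ▸ Finset.mem_univ b
  rw [Multiset.mem_toFinset] at hb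
  exact mem_map.mp hb

end MultisetLemmas


section Lift
variable (m : ℕ) [NeZero m]

lemma lift_sub {P : Multiset ((ZMod (m * 2) × ZMod (m * 2)) × (ZMod (m * 2) × ZMod (m * 2)))}
    (hP : ∀ z ∈ P, Good m z) {U : Multiset (ZMod m × ZMod m)} (hU : U ≤ P.map (half m)) :
    ∃ T, T ≤ elems m P ∧ T.card = 2 * U.card ∧ T.sum = Phi m U.sum := by
  obtain ⟨Q, hQle, hQmap⟩ := exists_le_map (half m) hU
  refine ⟨elems m Q, elems_le m hQle, ?_, ?_⟩
  · rw [card_elems, ← hQmap, card_map]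
  · rw [sum_elems m Q (fun z hz => hP z (mem_of_le hQle hz)), hQmap]

end Lift

lemma kemnitz_base (S : Multiset (ZMod 2 × ZMod 2)) (hS : 5 ≤ S.card) :
    ∃ T, T ≤ S ∧ T.card = 2 ∧ T.sum = 0 := by
  have hnd : ¬ S.Nodup := by
    intro hnd
    have h1 : S.toFinset.card = S.card := Multiset.toFinset_card_of_nodup hnd
    have h2 := Finset.card_le_univ S.toFinset
    have h3 : Fintype.card (ZMod 2 × ZMod 2) = 4 := by decide
    rw [h1] at h2; rw [h3] at h2; omega
  have hnd' : ¬ (S.map id).Nodup := by rwa [map_id]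
  obtain ⟨x, hx, y, hy, hxy⟩ := exists_dup id hnd'
  refine ⟨x ::ₘ y ::ₘ 0, ?_, by simp, ?_⟩
  · have hy1 : y ::ₘ 0 ≤ S.erase x := by
      have : ({y} : Multiset (ZMod 2 × ZMod 2)) ≤ S.erase x := singleton_le.mpr hy
      simpa using this
    calc x ::ₘ y ::ₘ 0 ≤ x ::ₘ S.erase x := cons_le_cons x hy1
    _ = S := cons_erase hx
  · have hxy' : x = y := hxy
    simp [← hxy']
    exact (by decide : ∀ w : ZMod 2 × ZMod 2, w + w = 0) x

theorem kemnitz : ∀ j : ℕ, 1 ≤ j → ∀ S : Multiset (ZMod (2 ^ j) × ZMod (2 ^ j)),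
    4 * 2 ^ j - 3 ≤ S.card → ∃ T, T ≤ S ∧ T.card = 2 ^ j ∧ T.sum = 0 := by
  intro j
  induction j with
  | zero => omega
  | succ j ih =>
    intro _ S hS
    rcases Nat.eq_zero_or_pos j with hj0 | hj1
    · subst hj0
      have h5 : 5 ≤ S.card := by
        have : (4 * 2 ^ 1 - 3 : ℕ) = 5 := by norm_num
        omega
      exact kemnitz_base S h5
    · -- inductive step
      set m := 2 ^ j with hm
      haveI : NeZero m := ⟨pow_ne_zero _ two_ne_zero⟩
      have hm2 : 2 ≤ m := by
        calc 2 = 2 ^ 1 := by norm_num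
        _ ≤ 2 ^ j := Nat.pow_le_pow_right (by norm_num) hj1
      -- S lives over ZMod (2^(j+1)) = ZMod (m*2)
      have hSc : 4 * (m * 2) - 3 ≤ S.card := by
        have : (2 : ℕ) ^ (j + 1) = m * 2 := by rw [pow_succ]
        omega
      obtain ⟨P, R, hsum, hgood, hnod⟩ :=
        exists_pairing (fun z => P2 m z) (S : Multiset (ZMod (m * 2) × ZMod (m * 2)))
      have hRcard : R.card ≤ 4 := by
        have := nodup_card_le (fun z => P2 m z) hnod
        simpa using this
      have hcards : 2 * P.card + R.card = S.card := by
        have := congrArg Multiset.card hsum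
        simp [card_add] at this
        have hSS : Multiset.card S = Multiset.card (α := ZMod (m * 2) × ZMod (m * 2)) S := rfl
        omega
      have hPcard : 4 * m - 3 ≤ P.card := by omega
      have hhalf : 4 * 2 ^ j - 3 ≤ (P.map (half m)).card := by rw [card_map]; omega
      obtain ⟨U, hUle, hUcard, hUsum⟩ := ih hj1 (P.map (half m)) hhalf
      obtain ⟨T, hTle, hTcard, hTsum⟩ := lift_sub m (fun z hz => hgood z hz) hUle
      refine ⟨T, ?_, ?_, ?_⟩
      · exact le_trans hTle (le_trans (le_add_right _ _) (le_of_eq hsum))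
      · exact hTcard.trans (by rw [hUcard, pow_succ]; ring)
      · exact hTsum.trans (by rw [hUsum]; exact _root_.map_zero _)

lemma big_pairing_zero (j : ℕ) (hj : 1 ≤ j)
    [NeZero (2 ^ j)]
    {P : Multiset ((ZMod (2 ^ j * 2) × ZMod (2 ^ j * 2)) × (ZMod (2 ^ j * 2) × ZMod (2 ^ j * 2)))}
    (hgood : ∀ z ∈ P, Good (2 ^ j) z) (hP : 4 * 2 ^ j - 3 ≤ P.card) :
    ∃ T, T ≤ elems (2 ^ j) P ∧ T.card = 2 ^ j * 2 ∧ T.sum = 0 := by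
  have hhalf : 4 * 2 ^ j - 3 ≤ (P.map (half (2 ^ j))).card := by rw [card_map]; omega
  obtain ⟨U, hUle, hUcard, hUsum⟩ := kemnitz j hj (P.map (half (2 ^ j))) hhalf
  obtain ⟨T, hTle, hTcard, hTsum⟩ := lift_sub (2 ^ j) hgood hUle
  refine ⟨T, hTle, by rw [hTcard, hUcard]; ring, by
    rw [hTsum, hUsum]; exact _root_.map_zero _⟩

theorem keyV_base (H : Multiset (ZMod 2 × ZMod 2))
    (hcard : H.card = 4) (hno : ¬ ∃ T, T ≤ H ∧ T.card = 2 ∧ T.sum = 0) :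
    (∀ t, ∃ U, U ≤ H ∧ U.card = 1 ∧ U.sum = t) ∧
    (∃ Z, Z ≤ H ∧ Z.card = 4 ∧ Z.sum = 0) := by
  have hnd : H.Nodup := by
    rw [nodup_iff_count_le_one]
    by_contra hcon
    push_neg at hcon
    obtain ⟨x, hx2⟩ := hcon
    refine hno ⟨x ::ₘ x ::ₘ 0, ?_, by simp, ?_⟩
    · rw [le_iff_count]
      intro a
      by_cases hax : a = x
      · subst hax
        simp only [count_cons_self, count_zero]
        omega
      · simp [count_cons_of_ne hax, Multiset.count_singleton, hax]
    · show x + (x + 0) = 0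
      rw [add_zero]
      exact (by decide : ∀ w : ZMod 2 × ZMod 2, w + w = 0) x
  have huniv : H.toFinset = Finset.univ := by
    apply Finset.eq_univ_of_card
    rw [Multiset.toFinset_card_of_nodup hnd, hcard]
    decide
  have hHuniv : H = (Finset.univ : Finset (ZMod 2 × ZMod 2)).val := by
    have hdd : H.toFinset.val = H := Multiset.dedup_eq_self.mpr hnd
    rw [← hdd, huniv]
  constructor
  · intro t
    refine ⟨t ::ₘ 0, ?_, by simp, by simp⟩
    have ht : t ∈ H := by rw [hHuniv]; simp
    simpa using singleton_le.mpr ht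
  · refine ⟨H, le_rfl, hcard, ?_⟩
    rw [hHuniv]
    decide

theorem keyV_step (j : ℕ) (hj1 : 1 ≤ j)
    (ih : ∀ H : Multiset (ZMod (2 ^ j) × ZMod (2 ^ j)),
      H.card = 4 * 2 ^ j - 4 → (¬ ∃ T, T ≤ H ∧ T.card = 2 ^ j ∧ T.sum = 0) →
      (∀ t, ∃ U, U ≤ H ∧ U.card = 2 ^ j - 1 ∧ U.sum = t) ∧
      (∃ Z, Z ≤ H ∧ Z.card = 3 * 2 ^ j - 2 ∧ Z.sum = 0))
    (H : Multiset (ZMod (2 ^ j * 2) × ZMod (2 ^ j * 2)))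
    (hcard : H.card = 8 * 2 ^ j - 4)
    (hno : ¬ ∃ T, T ≤ H ∧ T.card = 2 ^ j * 2 ∧ T.sum = 0) :
    (∀ t, ∃ U, U ≤ H ∧ U.card = 2 ^ j * 2 - 1 ∧ U.sum = t) ∧
    (∃ Z, Z ≤ H ∧ Z.card = 3 * (2 ^ j * 2) - 2 ∧ Z.sum = 0) := by
  haveI : NeZero (2 ^ j) := ⟨pow_ne_zero _ two_ne_zero⟩
  have hm2 : 2 ≤ 2 ^ j := by
    calc 2 = 2 ^ 1 := by norm_num
    _ ≤ 2 ^ j := Nat.pow_le_pow_right (by norm_num) hj1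
  have hno' : ∀ T : Multiset (ZMod ((2 ^ j) * 2) × ZMod ((2 ^ j) * 2)),
      T ≤ H → T.card = (2 ^ j) * 2 → T.sum ≠ 0 := by
    intro T hle hc hs
    exact hno ⟨T, hle, hc, hs⟩
  have hno2 : ∀ P : Multiset ((ZMod ((2 ^ j) * 2) × ZMod ((2 ^ j) * 2)) × (ZMod ((2 ^ j) * 2) × ZMod ((2 ^ j) * 2))),
      (∀ z ∈ P, Good (2 ^ j) z) → elems (2 ^ j) P ≤ H →
      ¬ ∃ T0, T0 ≤ P.map (half (2 ^ j)) ∧ T0.card = 2 ^ j ∧ T0.sum = 0 := by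
    rintro P hgood hPle ⟨T0, h1, h2, h3⟩
    obtain ⟨T, hTle, hTcard, hTsum⟩ := lift_sub (2 ^ j) hgood h1
    refine hno' T (hTle.trans hPle) (by rw [hTcard, h2]; ring) ?_
    rw [hTsum, h3]; exact _root_.map_zero _
  have hbig : ∀ P : Multiset ((ZMod ((2 ^ j) * 2) × ZMod ((2 ^ j) * 2)) × (ZMod ((2 ^ j) * 2) × ZMod ((2 ^ j) * 2))),
      (∀ z ∈ P, Good (2 ^ j) z) → elems (2 ^ j) P ≤ H → P.card ≤ 4 * (2 ^ j) - 4 := by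
    intro P hgood hPle
    by_contra hc
    push_neg at hc
    obtain ⟨T, hTle, hTcard, hTsum⟩ := big_pairing_zero j hj1 hgood (by omega)
    exact hno' T (hTle.trans hPle) hTcard hTsum
  obtain ⟨P, R, hsum, hgood, hnod⟩ := exists_pairing (fun z => P2 (2 ^ j) z) H
  have hPleH : elems (2 ^ j) P ≤ H := by
    rw [← hsum]; exact le_add_right _ _
  have hRleH : R ≤ H := by rw [← hsum]; exact le_add_left _ _
  have hRcard : R.card ≤ 4 := by
    have := nodup_card_le (fun z => P2 (2 ^ j) z) hnod
    simpa using this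
  have hcards : 2 * P.card + R.card = 8 * (2 ^ j) - 4 := by
    have hcc := congrArg Multiset.card hsum
    simp only [card_add, card_map] at hcc
    rw [hcard] at hcc
    omega
  have hPbound := hbig P hgood hPleH
  have hR4 : R.card = 4 := by omega
  have hP44 : P.card = 4 * (2 ^ j) - 4 := by omega
  have hallpar : ∀ g : ZMod 2 × ZMod 2,
      ∃ x : ZMod ((2 ^ j) * 2) × ZMod ((2 ^ j) * 2), x ∈ H ∧ P2 (2 ^ j) x = g := by
    intro g
    obtain ⟨x, hxR, hxg⟩ := nodup_card_eq_univ (fun z => P2 (2 ^ j) z) hnod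
      (by rw [hR4]; decide) g
    exact ⟨x, mem_of_le hRleH hxR, hxg⟩
  have part1 : ∀ t : ZMod ((2 ^ j) * 2) × ZMod ((2 ^ j) * 2),
      ∃ U, U ≤ H ∧ U.card = (2 ^ j) * 2 - 1 ∧ U.sum = t := by
    intro t
    obtain ⟨x, hxH, hxpar⟩ := hallpar (P2 (2 ^ j) t)
    obtain ⟨P1, R1, hsum1, hgood1, hnod1⟩ :=
      exists_pairing (fun z => P2 (2 ^ j) z) (H.erase x)
    have hP1leE : elems (2 ^ j) P1 ≤ H.erase x := by
      rw [← hsum1]; exact le_add_right _ _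
    have hP1leH : elems (2 ^ j) P1 ≤ H := hP1leE.trans (erase_le x H)
    have hR1card : R1.card ≤ 4 := by
      have := nodup_card_le (fun z => P2 (2 ^ j) z) hnod1
      simpa using this
    have hcards1 : 2 * P1.card + R1.card = 8 * (2 ^ j) - 5 := by
      have hcc := congrArg Multiset.card hsum1
      simp only [card_add, card_map] at hcc
      rw [card_erase_of_mem hxH, hcard, Nat.pred_eq_sub_one] at hcc
      omega
    have hP1bound := hbig P1 hgood1 hP1leH
    have hP1card : P1.card = 4 * (2 ^ j) - 4 := by omega
    have hH3card : (P1.map (half (2 ^ j))).card = 4 * 2 ^ j - 4 := by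
      rw [card_map, hP1card]
    obtain ⟨pt1, _⟩ := ih (P1.map (half (2 ^ j))) hH3card (hno2 P1 hgood1 hP1leH)
    obtain ⟨U, hUle, hUcard, hUsum⟩ := pt1 (Hf (2 ^ j) (t - x))
    obtain ⟨T, hTle, hTcard, hTsum⟩ := lift_sub (2 ^ j) hgood1 hUle
    have hPhiw : Phi (2 ^ j) (Hf (2 ^ j) (t - x)) = t - x := by
      apply Phi_Hf
      rw [map_sub, hxpar, sub_self]
    refine ⟨x ::ₘ T, ?_, ?_, ?_⟩
    · have hTE : T ≤ H.erase x := hTle.trans hP1leE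
      calc x ::ₘ T ≤ x ::ₘ H.erase x := cons_le_cons x hTE
      _ = H := cons_erase hxH
    · rw [card_cons, hTcard, hUcard]
      omega
    · rw [sum_cons, hTsum, hUsum, hPhiw]
      abel
  refine ⟨part1, ?_⟩
  have hH2card : (P.map (half (2 ^ j))).card = 4 * 2 ^ j - 4 := by
    rw [card_map, hP44]
  obtain ⟨pt1', _⟩ := ih (P.map (half (2 ^ j))) hH2card (hno2 P hgood hPleH)
  have hRuniv : R.map (fun z => P2 (2 ^ j) z) = (Finset.univ : Finset (ZMod 2 × ZMod 2)).val := by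
    have hcardM : (R.map (fun z => P2 (2 ^ j) z)).toFinset = Finset.univ := by
      apply Finset.eq_univ_of_card
      rw [Multiset.toFinset_card_of_nodup hnod, card_map, hR4]
      decide
    have hdd : (R.map (fun z => P2 (2 ^ j) z)).toFinset.val = R.map (fun z => P2 (2 ^ j) z) :=
      Multiset.dedup_eq_self.mpr hnod
    rw [← hdd, hcardM]
  have hP2Rsum : P2 (2 ^ j) R.sum = 0 := by
    rw [AddMonoidHom.map_multiset_sum]
    rw [show R.map (⇑(P2 (2 ^ j))) = R.map (fun z => P2 (2 ^ j) z) from rfl, hRuniv]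
    decide
  have hPhip : Phi (2 ^ j) (Hf (2 ^ j) R.sum) = R.sum := Phi_Hf (2 ^ j) _ hP2Rsum
  obtain ⟨K, hKle, hKcard, hKsum⟩ := pt1' ((P.map (half (2 ^ j))).sum + Hf (2 ^ j) R.sum)
  have hUK : (P.map (half (2 ^ j))) - K + K = P.map (half (2 ^ j)) := tsub_add_cancel_of_le hKle
  have hUcard : ((P.map (half (2 ^ j))) - K).card = 3 * (2 ^ j) - 3 := by
    have hcc := congrArg Multiset.card hUK
    rw [card_add, hKcard, hH2card] at hcc
    omega
  have hUsum : ((P.map (half (2 ^ j))) - K).sum = - Hf (2 ^ j) R.sum := by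
    have hss := congrArg Multiset.sum hUK
    rw [Multiset.sum_add, hKsum] at hss
    have h2 := eq_sub_of_add_eq hss
    rw [h2, sub_add_cancel_left]
  obtain ⟨T, hTle, hTcard, hTsum⟩ :=
    lift_sub (2 ^ j) hgood (tsub_le_self (a := P.map (half (2 ^ j))) (b := K))
  refine ⟨T + R, ?_, ?_, ?_⟩
  · calc T + R ≤ elems (2 ^ j) P + R := add_le_add hTle le_rfl
    _ = H := hsum
  · rw [card_add, hTcard, hUcard, hR4]
    omega
  · rw [Multiset.sum_add, hTsum, hUsum, map_neg, hPhip]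
    abel

theorem keyV : ∀ j : ℕ, 1 ≤ j → ∀ H : Multiset (ZMod (2 ^ j) × ZMod (2 ^ j)),
    H.card = 4 * 2 ^ j - 4 → (¬ ∃ T, T ≤ H ∧ T.card = 2 ^ j ∧ T.sum = 0) →
    (∀ t, ∃ U, U ≤ H ∧ U.card = 2 ^ j - 1 ∧ U.sum = t) ∧
    (∃ Z, Z ≤ H ∧ Z.card = 3 * 2 ^ j - 2 ∧ Z.sum = 0) := by
  intro j
  induction j with
  | zero => omega
  | succ j ih =>
    intro _ H hcard hno
    rcases Nat.eq_zero_or_pos j with hj0 | hj1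
    · subst hj0
      have h1 : H.card = 4 := by simpa using hcard
      have hno1 : ¬ ∃ T, T ≤ H ∧ T.card = 2 ∧ T.sum = 0 := by
        rintro ⟨T, ha, hb, hc⟩
        exact hno ⟨T, ha, by simpa using hb, hc⟩
      obtain ⟨p1, p2⟩ := keyV_base H h1 hno1
      constructor
      · intro t
        obtain ⟨U, ha, hb, hc⟩ := p1 t
        exact ⟨U, ha, by simpa using hb, hc⟩
      · obtain ⟨Z, ha, hb, hc⟩ := p2
        exact ⟨Z, ha, by simpa using hb, hc⟩
    · have hps : (2 : ℕ) ^ (j + 1) = 2 ^ j * 2 := pow_succ 2 j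
      have hcard2 : Multiset.card (α := ZMod (2 ^ j * 2) × ZMod (2 ^ j * 2)) H
          = 8 * 2 ^ j - 4 := by
        have hb : Multiset.card (α := ZMod (2 ^ j * 2) × ZMod (2 ^ j * 2)) H
            = Multiset.card H := rfl
        rw [hb, hcard]
        omega
      have hno2 : ¬ ∃ T : Multiset (ZMod (2 ^ j * 2) × ZMod (2 ^ j * 2)),
          T ≤ H ∧ T.card = 2 ^ j * 2 ∧ T.sum = 0 := by
        rintro ⟨T, ha, hb, hc⟩
        exact hno ⟨T, ha, hb.trans hps.symm, hc⟩
      obtain ⟨p1, p2⟩ := keyV_step j hj1 (ih hj1) H hcard2 hno2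
      constructor
      · intro t
        obtain ⟨U, ha, hb, hc⟩ := p1 t
        exact ⟨U, ha, hb.trans (by omega), hc⟩
      · obtain ⟨Z, ha, hb, hc⟩ := p2
        exact ⟨Z, ha, hb.trans (by omega), hc⟩

theorem keyZ (j : ℕ) (hj1 : 1 ≤ j)
    (S : Multiset (ZMod (2 ^ j * 2) × ZMod (2 ^ j * 2)))
    (hsum0 : S.sum = 0) (hcard : S.card = 8 * 2 ^ j - 4) :
    ∃ T, T ≤ S ∧ T.card = 2 ^ j * 2 ∧ T.sum = 0 := by
  by_contra hno
  haveI : NeZero (2 ^ j) := ⟨pow_ne_zero _ two_ne_zero⟩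
  have hm2 : 2 ≤ 2 ^ j := by
    calc 2 = 2 ^ 1 := by norm_num
    _ ≤ 2 ^ j := Nat.pow_le_pow_right (by norm_num) hj1
  have hno' : ∀ T : Multiset (ZMod ((2 ^ j) * 2) × ZMod ((2 ^ j) * 2)),
      T ≤ S → T.card = (2 ^ j) * 2 → T.sum ≠ 0 := by
    intro T hle hc hs
    exact hno ⟨T, hle, hc, hs⟩
  have hno2 : ∀ P : Multiset ((ZMod ((2 ^ j) * 2) × ZMod ((2 ^ j) * 2)) × (ZMod ((2 ^ j) * 2) × ZMod ((2 ^ j) * 2))),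
      (∀ z ∈ P, Good (2 ^ j) z) → elems (2 ^ j) P ≤ S →
      ¬ ∃ T0, T0 ≤ P.map (half (2 ^ j)) ∧ T0.card = 2 ^ j ∧ T0.sum = 0 := by
    rintro P hgood hPle ⟨T0, h1, h2, h3⟩
    obtain ⟨T, hTle, hTcard, hTsum⟩ := lift_sub (2 ^ j) hgood h1
    refine hno' T (hTle.trans hPle) (by rw [hTcard, h2]; ring) ?_
    rw [hTsum, h3]; exact _root_.map_zero _
  have hbig : ∀ P : Multiset ((ZMod ((2 ^ j) * 2) × ZMod ((2 ^ j) * 2)) × (ZMod ((2 ^ j) * 2) × ZMod ((2 ^ j) * 2))),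
      (∀ z ∈ P, Good (2 ^ j) z) → elems (2 ^ j) P ≤ S → P.card ≤ 4 * (2 ^ j) - 4 := by
    intro P hgood hPle
    by_contra hc
    push_neg at hc
    obtain ⟨T, hTle, hTcard, hTsum⟩ := big_pairing_zero j hj1 hgood (by omega)
    exact hno' T (hTle.trans hPle) hTcard hTsum
  obtain ⟨P, R, hsum, hgood, hnod⟩ := exists_pairing (fun z => P2 (2 ^ j) z) S
  have hPleH : elems (2 ^ j) P ≤ S := by
    rw [← hsum]; exact le_add_right _ _
  have hRleH : R ≤ S := by rw [← hsum]; exact le_add_left _ _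
  have hRcard : R.card ≤ 4 := by
    have := nodup_card_le (fun z => P2 (2 ^ j) z) hnod
    simpa using this
  have hcards : 2 * P.card + R.card = 8 * (2 ^ j) - 4 := by
    have hcc := congrArg Multiset.card hsum
    simp only [card_add, card_map] at hcc
    rw [hcard] at hcc
    omega
  have hPbound := hbig P hgood hPleH
  have hR4 : R.card = 4 := by omega
  have hP44 : P.card = 4 * (2 ^ j) - 4 := by omega
  have hH2card : (P.map (half (2 ^ j))).card = 4 * 2 ^ j - 4 := by
    rw [card_map, hP44]
  have hRuniv : R.map (fun z => P2 (2 ^ j) z) = (Finset.univ : Finset (ZMod 2 × ZMod 2)).val := by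
    have hcardM : (R.map (fun z => P2 (2 ^ j) z)).toFinset = Finset.univ := by
      apply Finset.eq_univ_of_card
      rw [Multiset.toFinset_card_of_nodup hnod, card_map, hR4]
      decide
    have hdd : (R.map (fun z => P2 (2 ^ j) z)).toFinset.val = R.map (fun z => P2 (2 ^ j) z) :=
      Multiset.dedup_eq_self.mpr hnod
    rw [← hdd, hcardM]
  have hP2Rsum : P2 (2 ^ j) R.sum = 0 := by
    rw [AddMonoidHom.map_multiset_sum]
    rw [show R.map (⇑(P2 (2 ^ j))) = R.map (fun z => P2 (2 ^ j) z) from rfl, hRuniv]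
    decide
  have hPhip : Phi (2 ^ j) (Hf (2 ^ j) R.sum) = R.sum := Phi_Hf (2 ^ j) _ hP2Rsum
  -- the sum of the halves is -p
  have hsums : Phi (2 ^ j) ((P.map (half (2 ^ j))).sum + Hf (2 ^ j) R.sum) = Phi (2 ^ j) 0 := by
    have hss := congrArg Multiset.sum hsum
    rw [Multiset.sum_add, hsum0] at hss
    have he : (elems (2 ^ j) P).sum = Phi (2 ^ j) (P.map (half (2 ^ j))).sum :=
      sum_elems (2 ^ j) P hgood
    rw [show (map Prod.fst P + map Prod.snd P).sum = (elems (2 ^ j) P).sum from rfl, he] at hss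
    rw [_root_.map_add, hPhip, _root_.map_zero, hss]
  have hkey : (P.map (half (2 ^ j))).sum = - Hf (2 ^ j) R.sum := by
    have := Phi_injective (2 ^ j) hsums
    have h0 : (P.map (half (2 ^ j))).sum + Hf (2 ^ j) R.sum = 0 := this
    linear_combination (norm := abel) h0
  obtain ⟨_, p2⟩ := keyV j hj1 (P.map (half (2 ^ j))) hH2card (hno2 P hgood hPleH)
  obtain ⟨Z0, hZle, hZcard, hZsum⟩ := p2
  have hUK : (P.map (half (2 ^ j))) - Z0 + Z0 = P.map (half (2 ^ j)) := tsub_add_cancel_of_le hZle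
  have hKcard : ((P.map (half (2 ^ j))) - Z0).card = 2 ^ j - 2 := by
    have hcc := congrArg Multiset.card hUK
    rw [card_add, hZcard, hH2card] at hcc
    omega
  have hKsum : ((P.map (half (2 ^ j))) - Z0).sum = - Hf (2 ^ j) R.sum := by
    have hss := congrArg Multiset.sum hUK
    rw [Multiset.sum_add, hZsum, add_zero] at hss
    rw [hss, hkey]
  obtain ⟨T, hTle, hTcard, hTsum⟩ :=
    lift_sub (2 ^ j) hgood (tsub_le_self (a := P.map (half (2 ^ j))) (b := Z0))
  refine hno' (T + R) ?_ ?_ ?_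
  · calc T + R ≤ elems (2 ^ j) P + R := add_le_add hTle le_rfl
    _ = S := hsum
  · rw [card_add, hTcard, hKcard, hR4]
    omega
  · rw [Multiset.sum_add, hTsum, hKsum, map_neg, hPhip]
    abel

section Examples

lemma dvd_cases {n a : ℕ} (hn : 0 < n) (h : n ∣ a) (h2 : a ≤ 2 * n - 2) : a = 0 ∨ a = n := by
  obtain ⟨k, rfl⟩ := h
  have hk : k ≤ 1 := by
    by_contra hc
    push_neg at hc
    have : n * 2 ≤ n * k := Nat.mul_le_mul_left n hc
    omega
  interval_cases k
  · simp
  · simp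

lemma decomp4 {α : Type*} [DecidableEq α] {A B C D : α} (T : Multiset α)
    (hsupp : ∀ x ∈ T, x = A ∨ x = B ∨ x = C ∨ x = D)
    (hAB : A ≠ B) (hAC : A ≠ C) (hAD : A ≠ D) (hBC : B ≠ C) (hBD : B ≠ D) (hCD : C ≠ D) :
    T = replicate (T.count A) A + replicate (T.count B) B +
        replicate (T.count C) C + replicate (T.count D) D := by
  ext x
  simp only [count_add, count_replicate]
  by_cases hA : x = A
  · subst hA
    rw [if_pos rfl, if_neg hAB.symm, if_neg hAC.symm, if_neg hAD.symm]
    omega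
  by_cases hB : x = B
  · subst hB
    rw [if_pos rfl, if_neg hAB, if_neg hBC.symm, if_neg hBD.symm]
    omega
  by_cases hC : x = C
  · subst hC
    rw [if_pos rfl, if_neg hAC, if_neg hBC, if_neg hCD.symm]
    omega
  by_cases hD : x = D
  · subst hD
    rw [if_pos rfl, if_neg hAD, if_neg hBD, if_neg hCD]
    omega
  have hx : x ∉ T := fun hmem => by
    rcases hsupp x hmem with h | h | h | h <;> simp_all
  rw [count_eq_zero_of_notMem hx, if_neg (fun h => hA h.symm), if_neg (fun h => hB h.symm),
    if_neg (fun h => hC h.symm), if_neg (fun h => hD h.symm)]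

lemma no_nzero_of_counts (n : ℕ) (hn : 4 ≤ n) (A B C D : ZMod n × ZMod n)
    (hAB : A ≠ B) (hAC : A ≠ C) (hAD : A ≠ D) (hBC : B ≠ C) (hBD : B ≠ D) (hCD : C ≠ D)
    (kd : ℕ) (hkd : kd ≤ n - 1)
    (hlin : ∀ a b c d : ℕ, a + b + c + d = n → a ≤ n - 1 → b ≤ n - 1 → c ≤ n - 1 → d ≤ kd →
      a • A + b • B + c • C + d • D ≠ 0) :
    ¬ ∃ T, T ≤ replicate (n - 1) A + replicate (n - 1) B + replicate (n - 1) C +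
        replicate kd D ∧ T.card = n ∧ T.sum = 0 := by
  haveI : NeZero n := ⟨by omega⟩
  rintro ⟨T, hle, hcard, hsum⟩
  set S := replicate (n - 1) A + replicate (n - 1) B + replicate (n - 1) C + replicate kd D
    with hS
  have hsupp : ∀ x ∈ T, x = A ∨ x = B ∨ x = C ∨ x = D := by
    intro x hx
    have hmem := mem_of_le hle hx
    simp only [hS, Multiset.mem_add] at hmem
    rcases hmem with ((h | h) | h) | h
    · exact Or.inl (eq_of_mem_replicate h)
    · exact Or.inr (Or.inl (eq_of_mem_replicate h))
    · exact Or.inr (Or.inr (Or.inl (eq_of_mem_replicate h)))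
    · exact Or.inr (Or.inr (Or.inr (eq_of_mem_replicate h)))
  have hdec := decomp4 T hsupp hAB hAC hAD hBC hBD hCD
  have hcount : ∀ x : ZMod n × ZMod n, T.count x ≤ S.count x := le_iff_count.mp hle
  have hcA : T.count A ≤ n - 1 := by
    have h1 := hcount A
    simp only [hS, count_add, count_replicate] at h1
    rw [if_neg hAB.symm, if_neg hAC.symm, if_neg hAD.symm] at h1
    simp at h1
    omega
  have hcB : T.count B ≤ n - 1 := by
    have h1 := hcount B
    simp only [hS, count_add, count_replicate] at h1
    rw [if_neg hAB, if_neg hBC.symm, if_neg hBD.symm] at h1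
    simp at h1
    omega
  have hcC : T.count C ≤ n - 1 := by
    have h1 := hcount C
    simp only [hS, count_add, count_replicate] at h1
    rw [if_neg hAC, if_neg hBC, if_neg hCD.symm] at h1
    simp at h1
    omega
  have hcD : T.count D ≤ kd := by
    have h1 := hcount D
    simp only [hS, count_add, count_replicate] at h1
    rw [if_neg hAD, if_neg hBD, if_neg hCD] at h1
    simp at h1
    omega
  have hcardT : T.count A + T.count B + T.count C + T.count D = n := by
    have hcc := congrArg Multiset.card hdec
    simp only [card_add, card_replicate, hcard] at hcc
    omega
  have hsumT : T.count A • A + T.count B • B + T.count C • C + T.count D • D = 0 := by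
    have hss := congrArg Multiset.sum hdec
    simp only [Multiset.sum_add, sum_replicate, hsum] at hss
    exact hss.symm
  exact hlin _ _ _ _ hcardT hcA hcB hcC hcD hsumT

lemma example_E1 (n : ℕ) (hn : 4 ≤ n) :
    ∃ S : Multiset (ZMod n × ZMod n), S.card = 4 * n - 4 ∧
      ¬ ∃ T, T ≤ S ∧ T.card = n ∧ T.sum = 0 := by
  haveI : NeZero n := ⟨by omega⟩
  have h10 : (1 : ZMod n) ≠ 0 := by
    haveI : Fact (1 < n) := ⟨by omega⟩
    exact one_ne_zero
  set A : ZMod n × ZMod n := (0, 0) with hA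
  set B : ZMod n × ZMod n := (1, 0) with hB
  set C : ZMod n × ZMod n := (0, 1) with hC
  set D : ZMod n × ZMod n := (1, 1) with hD
  have hAB : A ≠ B := fun hcon => h10 (congrArg Prod.fst hcon).symm
  have hAC : A ≠ C := fun hcon => h10 (congrArg Prod.snd hcon).symm
  have hAD : A ≠ D := fun hcon => h10 (congrArg Prod.fst hcon).symm
  have hBC : B ≠ C := fun hcon => h10 (congrArg Prod.fst hcon)
  have hBD : B ≠ D := fun hcon => h10 (congrArg Prod.snd hcon).symm
  have hCD : C ≠ D := fun hcon => h10 (congrArg Prod.fst hcon).symm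
  refine ⟨replicate (n - 1) A + replicate (n - 1) B + replicate (n - 1) C + replicate (n - 1) D,
    by simp [card_replicate]; omega, ?_⟩
  apply no_nzero_of_counts n hn A B C D hAB hAC hAD hBC hBD hCD (n - 1) le_rfl
  intro a b c d hsum ha hb hc hd heq
  have h1 : (b : ZMod n) + (d : ZMod n) = 0 := by
    have := congrArg Prod.fst heq
    simpa [hA, hB, hC, hD, nsmul_eq_mul] using this
  have h2 : (c : ZMod n) + (d : ZMod n) = 0 := by
    have := congrArg Prod.snd heq
    simpa [hA, hB, hC, hD, nsmul_eq_mul] using this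
  rw [← Nat.cast_add, ZMod.natCast_eq_zero_iff] at h1 h2
  have hbd := dvd_cases (by omega : 0 < n) h1 (by omega)
  have hcd := dvd_cases (by omega : 0 < n) h2 (by omega)
  omega

lemma example_E2 (n : ℕ) (hn : 4 ≤ n) (τ : ZMod n) (hτ : 5 * τ = -3) :
    ∃ S : Multiset (ZMod n × ZMod n), S.card = 4 * n - 5 ∧ S.sum = 0 ∧
      ¬ ∃ T, T ≤ S ∧ T.card = n ∧ T.sum = 0 := by
  haveI : NeZero n := ⟨by omega⟩
  have h10 : (1 : ZMod n) ≠ 0 := by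
    haveI : Fact (1 < n) := ⟨by omega⟩
    exact one_ne_zero
  have hττ : τ ≠ τ + 1 := by
    intro hcon
    exact h10 (by linear_combination -hcon)
  set A : ZMod n × ZMod n := (τ, τ) with hA
  set B : ZMod n × ZMod n := (τ + 1, τ) with hB
  set C : ZMod n × ZMod n := (τ, τ + 1) with hC
  set D : ZMod n × ZMod n := (τ + 1, τ + 1) with hD
  have hAB : A ≠ B := fun hcon => hττ (congrArg Prod.fst hcon)
  have hAC : A ≠ C := fun hcon => hττ (congrArg Prod.snd hcon)
  have hAD : A ≠ D := fun hcon => hττ (congrArg Prod.fst hcon)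
  have hBC : B ≠ C := fun hcon => hττ (congrArg Prod.fst hcon).symm
  have hBD : B ≠ D := fun hcon => hττ (congrArg Prod.snd hcon)
  have hCD : C ≠ D := fun hcon => hττ (congrArg Prod.fst hcon)
  have hc1 : ((n - 1 : ℕ) : ZMod n) = -1 := by
    rw [Nat.cast_sub (by omega : 1 ≤ n), ZMod.natCast_self, zero_sub, Nat.cast_one]
  have hc2 : ((n - 2 : ℕ) : ZMod n) = -2 := by
    rw [Nat.cast_sub (by omega : 2 ≤ n), ZMod.natCast_self, zero_sub, Nat.cast_ofNat]
  refine ⟨replicate (n - 1) A + replicate (n - 1) B + replicate (n - 1) C + replicate (n - 2) D,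
    by simp [card_replicate]; omega, ?_, ?_⟩
  · -- zero-sum
    simp only [Multiset.sum_add, sum_replicate]
    apply Prod.ext
    · show (n-1) • A.1 + (n-1) • B.1 + (n-1) • C.1 + (n-2) • D.1 = (0 : ZMod n)
      simp only [hA, hB, hC, hD, nsmul_eq_mul, hc1, hc2]
      linear_combination -hτ
    · show (n-1) • A.2 + (n-1) • B.2 + (n-1) • C.2 + (n-2) • D.2 = (0 : ZMod n)
      simp only [hA, hB, hC, hD, nsmul_eq_mul, hc1, hc2]
      linear_combination -hτ
  · apply no_nzero_of_counts n hn A B C D hAB hAC hAD hBC hBD hCD (n - 2) (by omega)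
    intro a b c d hsum ha hb hc hd heq
    have hcast : (a : ZMod n) + b + c + d = 0 := by
      have : ((a + b + c + d : ℕ) : ZMod n) = ((n : ℕ) : ZMod n) := by rw [hsum]
      rw [ZMod.natCast_self] at this
      push_cast at this
      exact this
    have h1 : (b : ZMod n) + (d : ZMod n) = 0 := by
      have hfst := congrArg Prod.fst heq
      simp only [hA, hB, hC, hD, Prod.fst_add, Prod.smul_fst, Prod.fst_zero] at hfst
      simp only [nsmul_eq_mul] at hfst
      linear_combination hfst - τ * hcast
    have h2 : (c : ZMod n) + (d : ZMod n) = 0 := by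
      have hsnd := congrArg Prod.snd heq
      simp only [hA, hB, hC, hD, Prod.snd_add, Prod.smul_snd, Prod.snd_zero] at hsnd
      simp only [nsmul_eq_mul] at hsnd
      linear_combination hsnd - τ * hcast
    rw [← Nat.cast_add, ZMod.natCast_eq_zero_iff] at h1 h2
    have hbd := dvd_cases (by omega : 0 < n) h1 (by omega)
    have hcd := dvd_cases (by omega : 0 < n) h2 (by omega)
    omega

end Examples

theorem zhong_remark_ii (h : ℕ) (hh : 2 ≤ h)
    (sG s'G : ℕ)
    (hs : IsLeast {ℓ : ℕ | ∀ S : Multiset (ZMod (2 ^ h) × ZMod (2 ^ h)),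
      ℓ ≤ S.card → ∃ T : Multiset (ZMod (2 ^ h) × ZMod (2 ^ h)),
        T ≤ S ∧ T.card = 2 ^ h ∧ T.sum = 0} sG)
    (hs' : IsLeast {ℓ : ℕ | ∀ S : Multiset (ZMod (2 ^ h) × ZMod (2 ^ h)),
      S.sum = 0 → ℓ ≤ S.card → ∃ T : Multiset (ZMod (2 ^ h) × ZMod (2 ^ h)),
        T ≤ S ∧ T.card = 2 ^ h ∧ T.sum = 0} s'G) :
    s'G = sG - 1 ∧ s'G = 4 * 2 ^ h - 4 := by
  have hh1 : 1 ≤ h := by omega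
  haveI : NeZero ((2 : ℕ) ^ h) := ⟨pow_ne_zero _ two_ne_zero⟩
  have hn4 : 4 ≤ 2 ^ h := by
    calc (4 : ℕ) = 2 ^ 2 := by norm_num
    _ ≤ 2 ^ h := Nat.pow_le_pow_right (by norm_num) hh
  have mem_s : (4 * 2 ^ h - 3) ∈ {ℓ : ℕ | ∀ S : Multiset (ZMod (2 ^ h) × ZMod (2 ^ h)),
      ℓ ≤ S.card → ∃ T : Multiset (ZMod (2 ^ h) × ZMod (2 ^ h)),
        T ≤ S ∧ T.card = 2 ^ h ∧ T.sum = 0} := kemnitz h hh1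
  have hs_up : sG ≤ 4 * 2 ^ h - 3 := hs.2 mem_s
  have mem_s' : (4 * 2 ^ h - 4) ∈ {ℓ : ℕ | ∀ S : Multiset (ZMod (2 ^ h) × ZMod (2 ^ h)),
      S.sum = 0 → ℓ ≤ S.card → ∃ T : Multiset (ZMod (2 ^ h) × ZMod (2 ^ h)),
        T ≤ S ∧ T.card = 2 ^ h ∧ T.sum = 0} := by
    intro S hsum0 hcard
    rcases le_or_gt (4 * 2 ^ h - 3) S.card with hge | hlt
    · exact kemnitz h hh1 S hge
    · have hceq : S.card = 4 * 2 ^ h - 4 := by omega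
      obtain ⟨j, rfl⟩ : ∃ j, h = j + 1 := ⟨h - 1, by omega⟩
      have hj1 : 1 ≤ j := by omega
      have hcc : Multiset.card (α := ZMod (2 ^ j * 2) × ZMod (2 ^ j * 2)) S = 8 * 2 ^ j - 4 := by
        have hb : Multiset.card (α := ZMod (2 ^ j * 2) × ZMod (2 ^ j * 2)) S = S.card := rfl
        have hp : (2 : ℕ) ^ (j + 1) = 2 ^ j * 2 := pow_succ 2 j
        omega
      obtain ⟨T, ha, hb, hc⟩ := keyZ j hj1 S hsum0 hcc
      exact ⟨T, ha, hb.trans (pow_succ 2 j).symm, hc⟩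
  have hs'_up : s'G ≤ 4 * 2 ^ h - 4 := hs'.2 mem_s'
  obtain ⟨S1, hS1card, hS1no⟩ := example_E1 (2 ^ h) hn4
  have hs_low : 4 * 2 ^ h - 3 ≤ sG := by
    by_contra hcon
    push_neg at hcon
    exact hS1no (hs.1 S1 (by omega))
  have hcop : Nat.Coprime 5 (2 ^ h) := Nat.Coprime.pow_right _ (by decide)
  have hτex : ∃ τ : ZMod (2 ^ h), 5 * τ = -3 := by
    refine ⟨(↑(ZMod.unitOfCoprime 5 hcop)⁻¹ : ZMod (2 ^ h)) * (-3), ?_⟩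
    have h5 : ((ZMod.unitOfCoprime 5 hcop : (ZMod (2 ^ h))ˣ) : ZMod (2 ^ h)) = 5 := by
      rw [ZMod.coe_unitOfCoprime]
      norm_num
    rw [← h5, ← mul_assoc, ← Units.val_mul, mul_inv_cancel, Units.val_one, one_mul]
  obtain ⟨τ, hτ⟩ := hτex
  obtain ⟨S2, hS2card, hS2sum, hS2no⟩ := example_E2 (2 ^ h) hn4 τ hτ
  have hs'_low : 4 * 2 ^ h - 4 ≤ s'G := by
    by_contra hcon
    push_neg at hcon
    exact hS2no (hs'.1 S2 hS2sum (by omega))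
  exact ⟨by omega, by omega⟩
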